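/- Let h: ℝⁿ → ℝ be convex, differentiable, with L-Lipschitz gradient, and let μ ≥ 0 be such that h - (μ/2)‖·‖² is convex, μ < L. Then for all x, y: h(x) - h(y) - ⟨∇h(y), x - y⟩ ≥ (1/(2(1-μ/L)))·[(1/L)‖∇h(x) - ∇h(y)‖² + μ‖x - y‖² - (2μ/L)⟨∇h(y) - ∇h(x), y - x⟩]. -/

import Mathlib

open scoped RealInnerProductSpace

variable {n : ℕ}

local notation "E" => EuclideanSpace ℝ (Fin n)

/-- derivative along a line -/
lemma line_hasDerivAt {f : EuclideanSpace ℝ (Fin n) → ℝ} {g : EuclideanSpace ℝ (Fin n) → EuclideanSpace ℝ (Fin n)}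
    (hg : ∀ x, HasGradientAt f (g x) x) (a v : EuclideanSpace ℝ (Fin n)) (t : ℝ) :
    HasDerivAt (fun s : ℝ => f (a + s • v)) ⟪g (a + t • v), v⟫ t := by
  have hc : HasDerivAt (fun s : ℝ => a + s • v) v t := by
    simpa using ((hasDerivAt_id t).smul_const v).const_add a
  have hF := hasGradientAt_iff_hasFDerivAt.mp (hg (a + t • v))
  have := hF.comp_hasDerivAt t hc
  simp [InnerProductSpace.toDual_apply_apply] at this
  exact this

lemma line_convexOn {f : EuclideanSpace ℝ (Fin n) → ℝ}
    (hc : ConvexOn ℝ Set.univ f) (a v : EuclideanSpace ℝ (Fin n)) :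
    ConvexOn ℝ Set.univ (fun t : ℝ => f (a + t • v)) := by
  have h := hc.comp_affineMap (AffineMap.lineMap a (a + v) : ℝ →ᵃ[ℝ] EuclideanSpace ℝ (Fin n))
  have : (fun t : ℝ => f (a + t • v)) = (f ∘ (AffineMap.lineMap a (a + v) : ℝ →ᵃ[ℝ] EuclideanSpace ℝ (Fin n))) := by
    funext t
    simp only [Function.comp_apply, AffineMap.lineMap_apply_module]
    congr 1
    module
  rw [this]
  simpa using h

/-- a convex differentiable function lies above its tangents -/
lemma convex_lower {f : EuclideanSpace ℝ (Fin n) → ℝ} {g : EuclideanSpace ℝ (Fin n) → EuclideanSpace ℝ (Fin n)}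
    (hc : ConvexOn ℝ Set.univ f) (hg : ∀ x, HasGradientAt f (g x) x)
    (x z : EuclideanSpace ℝ (Fin n)) :
    f x + ⟪g x, z - x⟫ ≤ f z := by
  set v := z - x with hv
  have hφ := line_convexOn hc x v
  have hd := line_hasDerivAt hg x v 0
  simp only [zero_smul, add_zero] at hd
  have := hφ.le_slope_of_hasDerivAt (Set.mem_univ (0:ℝ)) (Set.mem_univ (1:ℝ)) one_pos hd
  rw [slope_def_field] at this
  have h1 : x + (1:ℝ) • v = z := by rw [hv]; rw [one_smul]; abel
  have h0 : x + (0:ℝ) • v = x := by simp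
  rw [h1, h0] at this
  have h2 : (f z - f x) / (1 - 0) = f z - f x := by norm_num
  rw [h2] at this
  linarith

/-- descent lemma from Lipschitz gradient -/
lemma descent_lemma {f : EuclideanSpace ℝ (Fin n) → ℝ} {g : EuclideanSpace ℝ (Fin n) → EuclideanSpace ℝ (Fin n)}
    {L : ℝ} (hL : 0 < L) (hg : ∀ x, HasGradientAt f (g x) x)
    (hlip : ∀ x y, ‖g x - g y‖ ≤ L * ‖x - y‖) (y z : EuclideanSpace ℝ (Fin n)) :
    f z ≤ f y + ⟪g y, z - y⟫ + L / 2 * ‖z - y‖ ^ 2 := by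
  set v := z - y with hv
  set ψ : ℝ → ℝ := fun t => f (y + t • v) - t * ⟪g y, v⟫ - L / 2 * t ^ 2 * ‖v‖ ^ 2 with hψ
  have hd : ∀ t : ℝ, HasDerivAt ψ (⟪g (y + t • v), v⟫ - ⟪g y, v⟫ - L * t * ‖v‖ ^ 2) t := by
    intro t
    have h1 := line_hasDerivAt hg y v t
    have h2 : HasDerivAt (fun t : ℝ => t * ⟪g y, v⟫) ⟪g y, v⟫ t := hasDerivAt_mul_const _
    have h3 : HasDerivAt (fun t : ℝ => L / 2 * t ^ 2 * ‖v‖ ^ 2) (L * t * ‖v‖ ^ 2) t := by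
      have := ((hasDerivAt_pow 2 t).const_mul (L / 2)).mul_const (‖v‖ ^ 2)
      convert this using 1
      · rfl
      · rfl
      push_cast
      ring
    exact (h1.sub h2).sub h3
  have hanti : AntitoneOn ψ (Set.Icc (0:ℝ) 1) := by
    apply antitoneOn_of_deriv_nonpos (convex_Icc 0 1)
    · exact fun t _ => ((hd t).differentiableAt).continuousAt.continuousWithinAt
    · exact fun t _ => ((hd t).differentiableAt).differentiableWithinAt
    · intro t ht
      rw [interior_Icc] at ht
      rw [(hd t).deriv]
      have hin : ⟪g (y + t • v), v⟫ - ⟪g y, v⟫ = ⟪g (y + t • v) - g y, v⟫ := by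
        rw [inner_sub_left]
      rw [hin]
      have h4 : ⟪g (y + t • v) - g y, v⟫ ≤ ‖g (y + t • v) - g y‖ * ‖v‖ := real_inner_le_norm _ _
      have h5 : ‖g (y + t • v) - g y‖ ≤ L * ‖(y + t • v) - y‖ := hlip _ _
      have h6 : ‖(y + t • v) - y‖ = t * ‖v‖ := by
        simp [norm_smul, abs_of_pos ht.1]
      rw [h6] at h5
      have h7 : ‖g (y + t • v) - g y‖ * ‖v‖ ≤ L * t * ‖v‖ ^ 2 := by
        nlinarith [norm_nonneg v]
      linarith
  have := hanti (Set.mem_Icc.mpr ⟨le_refl 0, zero_le_one⟩) (Set.mem_Icc.mpr ⟨zero_le_one, le_refl 1⟩) zero_le_one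
  simp only [hψ] at this
  have h0 : y + (0:ℝ) • v = y := by simp
  have h1 : y + (1:ℝ) • v = z := by rw [one_smul, hv]; abel
  rw [h0, h1] at this
  linarith

lemma grad_quadratic (μ : ℝ) (x : EuclideanSpace ℝ (Fin n)) :
    HasGradientAt (fun w : EuclideanSpace ℝ (Fin n) => μ / 2 * ‖w‖ ^ 2) (μ • x) x := by
  rw [hasGradientAt_iff_hasFDerivAt]
  have h1 : HasFDerivAt (fun w : EuclideanSpace ℝ (Fin n) => (⟪w, w⟫ : ℝ))
      ((fderivInnerCLM ℝ (x, x)).comp ((ContinuousLinearMap.id ℝ _).prod (ContinuousLinearMap.id ℝ _))) x :=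
    (hasFDerivAt_id x).inner ℝ (hasFDerivAt_id x)
  have h2 := h1.const_mul (μ / 2)
  convert h2 using 1
  · rfl
  · funext w
    rw [real_inner_self_eq_norm_sq]
  · ext w
    simp only [ContinuousLinearMap.smul_apply, ContinuousLinearMap.coe_comp',
      Function.comp_apply, ContinuousLinearMap.prod_apply, ContinuousLinearMap.coe_id',
      id_eq, fderivInnerCLM_apply, InnerProductSpace.toDual_apply_apply, real_inner_smul_left,
      smul_eq_mul]
    rw [real_inner_comm w x]
    ring

lemma grad_linear (c : EuclideanSpace ℝ (Fin n)) (x : EuclideanSpace ℝ (Fin n)) :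
    HasGradientAt (fun w : EuclideanSpace ℝ (Fin n) => (⟪c, w⟫ : ℝ)) c x := by
  rw [hasGradientAt_iff_hasFDerivAt]
  have h1 : HasFDerivAt (fun w : EuclideanSpace ℝ (Fin n) => (innerSL ℝ c) w) (innerSL ℝ c) x :=
    (innerSL ℝ c).hasFDerivAt
  have h2 : (InnerProductSpace.toDual ℝ (EuclideanSpace ℝ (Fin n))) c = innerSL ℝ c := by
    ext w
    simp only [InnerProductSpace.toDual_apply_apply, innerSL_apply_apply]
  rw [h2]
  exact h1

lemma grad_sub {f₁ f₂ : EuclideanSpace ℝ (Fin n) → ℝ} {g₁ g₂ : EuclideanSpace ℝ (Fin n)}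
    {x : EuclideanSpace ℝ (Fin n)} (h₁ : HasGradientAt f₁ g₁ x) (h₂ : HasGradientAt f₂ g₂ x) :
    HasGradientAt (fun w => f₁ w - f₂ w) (g₁ - g₂) x := by
  rw [hasGradientAt_iff_hasFDerivAt] at *
  have := h₁.sub h₂
  convert this using 1
  · rfl
  · rfl
  · rfl
  ext w
  simp [InnerProductSpace.toDual_apply_apply, inner_sub_left]

lemma inner_convexOn (c : EuclideanSpace ℝ (Fin n)) :
    ConvexOn ℝ Set.univ (fun w : EuclideanSpace ℝ (Fin n) => (⟪c, w⟫ : ℝ)) := by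
  refine ⟨convex_univ, fun p _ q _ α β hα hβ hαβ => le_of_eq ?_⟩
  show (⟪c, α • p + β • q⟫ : ℝ) = α • (⟪c, p⟫ : ℝ) + β • (⟪c, q⟫ : ℝ)
  rw [inner_add_right, real_inner_smul_right, real_inner_smul_right, smul_eq_mul, smul_eq_mul]

lemma inner_concaveOn (c : EuclideanSpace ℝ (Fin n)) :
    ConcaveOn ℝ Set.univ (fun w : EuclideanSpace ℝ (Fin n) => (⟪c, w⟫ : ℝ)) := by
  refine ⟨convex_univ, fun p _ q _ α β hα hβ hαβ => le_of_eq ?_⟩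
  show α • (⟪c, p⟫ : ℝ) + β • (⟪c, q⟫ : ℝ) = (⟪c, α • p + β • q⟫ : ℝ)
  rw [inner_add_right, real_inner_smul_right, real_inner_smul_right, smul_eq_mul, smul_eq_mul]

lemma cocoercive {f : EuclideanSpace ℝ (Fin n) → ℝ} {g : EuclideanSpace ℝ (Fin n) → EuclideanSpace ℝ (Fin n)}
    {L' : ℝ} (hL' : 0 < L') (hc : ConvexOn ℝ Set.univ f)
    (hg : ∀ x, HasGradientAt f (g x) x)
    (hdesc : ∀ a b, f b ≤ f a + ⟪g a, b - a⟫ + L' / 2 * ‖b - a‖ ^ 2)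
    (a b : EuclideanSpace ℝ (Fin n)) :
    1 / (2 * L') * ‖g a - g b‖ ^ 2 ≤ f b - f a - ⟪g a, b - a⟫ := by
  set d := g b - g a with hd
  set z := b - (L')⁻¹ • d with hzdef
  -- the shifted function
  have hφc : ConvexOn ℝ Set.univ (fun w => f w - ⟪g a, w⟫) := hc.sub (inner_concaveOn (g a))
  have hgφ : ∀ w, HasGradientAt (fun w => f w - ⟪g a, w⟫) (g w - g a) w :=
    fun w => grad_sub (hg w) (grad_linear (g a) w)
  have h1 := convex_lower hφc hgφ a z
  rw [sub_self, inner_zero_left, add_zero] at h1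
  have h2 := hdesc b z
  have hzb : z - b = -((L')⁻¹ • d) := by rw [hzdef]; abel
  have hgbz : ⟪g b, z - b⟫ = -((L')⁻¹ * ⟪g b, d⟫) := by
    rw [hzb, inner_neg_right, real_inner_smul_right]
  have hnz : ‖z - b‖ ^ 2 = (L')⁻¹ ^ 2 * ‖d‖ ^ 2 := by
    rw [hzb, norm_neg, norm_smul, mul_pow, Real.norm_eq_abs, sq_abs]
  have hgaz : ⟪g a, z⟫ = ⟪g a, b⟫ - (L')⁻¹ * ⟪g a, d⟫ := by
    have : z = b + -((L')⁻¹ • d) := by rw [hzdef]; abel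
    rw [this, inner_add_right, inner_neg_right, real_inner_smul_right]
    ring
  have hQP : ⟪g b, d⟫ - ⟪g a, d⟫ = ‖d‖ ^ 2 := by
    rw [← inner_sub_left, ← hd, real_inner_self_eq_norm_sq]
  have hab : ⟪g a, b - a⟫ = ⟪g a, b⟫ - ⟪g a, a⟫ := by rw [inner_sub_right]
  have e1 : L' / 2 * ((L')⁻¹ ^ 2 * ‖d‖ ^ 2) = 1 / (2 * L') * ‖d‖ ^ 2 := by
    field_simp
  have e3 : (L')⁻¹ * ⟪g b, d⟫ - (L')⁻¹ * ⟪g a, d⟫ = 2 * (1 / (2 * L') * ‖d‖ ^ 2) := by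
    rw [← mul_sub, hQP]
    field_simp
  have hdnorm : ‖g a - g b‖ = ‖d‖ := by rw [hd, ← norm_neg]; congr 1; abel
  rw [hdnorm, hab]
  rw [hgbz, hnz, e1] at h2
  rw [hgaz] at h1
  linarith

/-- interpolation inequality for an `L`-smooth `μ`-strongly convex function
(necessity part of the Taylor–Hendrickx–Glineur interpolation theorem). -/
theorem stmt_16 {n : ℕ} (h : EuclideanSpace ℝ (Fin n) → ℝ) (L μ : ℝ)
    (hμ : 0 ≤ μ) (hμL : μ < L)
    (hconv : ConvexOn ℝ Set.univ h)
    (G : EuclideanSpace ℝ (Fin n) → EuclideanSpace ℝ (Fin n))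
    (hgrad : ∀ x, HasGradientAt h (G x) x)
    (hlip : ∀ x y, ‖G x - G y‖ ≤ L * ‖x - y‖)
    (hsc : ConvexOn ℝ Set.univ (fun x => h x - μ / 2 * ‖x‖ ^ 2)) :
    ∀ x y : EuclideanSpace ℝ (Fin n),
      h x - h y - ⟪G y, x - y⟫ ≥
        1 / (2 * (1 - μ / L)) *
          (1 / L * ‖G x - G y‖ ^ 2 + μ * ‖x - y‖ ^ 2 -
            2 * μ / L * ⟪G y - G x, y - x⟫) := by
  intro x y
  have hL : 0 < L := lt_of_le_of_lt hμ hμL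
  have hL' : 0 < L - μ := by linarith
  set G0 : EuclideanSpace ℝ (Fin n) → EuclideanSpace ℝ (Fin n) := fun w => G w - μ • w with hG0
  have hg0 : ∀ w, HasGradientAt (fun x => h x - μ / 2 * ‖x‖ ^ 2) (G0 w) w :=
    fun w => grad_sub (hgrad w) (grad_quadratic μ w)
  -- identity for norms
  have hid : ∀ a b : EuclideanSpace ℝ (Fin n),
      ‖b‖ ^ 2 = ‖a‖ ^ 2 + 2 * ⟪a, b - a⟫ + ‖b - a‖ ^ 2 := by
    intro a b
    have hab : a + (b - a) = b := by abel
    calc ‖b‖ ^ 2 = ‖a + (b - a)‖ ^ 2 := by rw [hab]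
    _ = ‖a‖ ^ 2 + 2 * ⟪a, b - a⟫ + ‖b - a‖ ^ 2 := norm_add_sq_real a (b - a)
  -- descent lemma for the shifted function
  have hdesc0 : ∀ a b : EuclideanSpace ℝ (Fin n),
      (h b - μ / 2 * ‖b‖ ^ 2) ≤ (h a - μ / 2 * ‖a‖ ^ 2) + ⟪G0 a, b - a⟫
        + (L - μ) / 2 * ‖b - a‖ ^ 2 := by
    intro a b
    have hU := descent_lemma hL hgrad hlip a b
    have h5 : ⟪G0 a, b - a⟫ = ⟪G a, b - a⟫ - μ * ⟪a, b - a⟫ := by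
      rw [hG0, inner_sub_left, real_inner_smul_left]
    have h6 := hid a b
    have h8 : μ / 2 * ‖b‖ ^ 2 - μ / 2 * ‖a‖ ^ 2 - μ * ⟪a, b - a⟫ - μ / 2 * ‖b - a‖ ^ 2 = 0 := by
      rw [h6]; ring
    linarith
  have coco := cocoercive hL' hsc hg0 hdesc0 y x
  -- algebraic expansions
  set p : ℝ := ⟪G x - G y, x - y⟫ with hp
  have hnorm : ‖G0 y - G0 x‖ ^ 2 = ‖G x - G y‖ ^ 2 - 2 * (μ * p) + μ ^ 2 * ‖x - y‖ ^ 2 := by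
    have hGG : G0 y - G0 x = -((G x - G y) - μ • (x - y)) := by
      rw [hG0]
      simp only [smul_sub]
      abel
    rw [hGG, norm_neg, norm_sub_sq_real, real_inner_smul_right, norm_smul, mul_pow,
      Real.norm_eq_abs, sq_abs, hp]
  have hG0y : ⟪G0 y, x - y⟫ = ⟪G y, x - y⟫ - μ * ⟪y, x - y⟫ := by
    rw [hG0, inner_sub_left, real_inner_smul_left]
  have hrhs : ⟪G y - G x, y - x⟫ = p := by
    rw [hp, show G y - G x = -(G x - G y) by abel, show y - x = -(x - y) by abel, inner_neg_neg]
  rw [hrhs]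
  have hxy2 := hid y x
  have hfinal : 1 / (2 * (1 - μ / L)) * (1 / L * ‖G x - G y‖ ^ 2 + μ * ‖x - y‖ ^ 2 - 2 * μ / L * p)
      = 1 / (2 * (L - μ)) * (‖G x - G y‖ ^ 2 - 2 * (μ * p) + μ ^ 2 * ‖x - y‖ ^ 2)
        + μ / 2 * ‖x - y‖ ^ 2 := by
    have hLne : L ≠ 0 := ne_of_gt hL
    have hne : 1 - μ / L ≠ 0 := by
      have : 0 < 1 - μ / L := by
        rw [sub_pos, div_lt_one hL]
        exact hμL
      exact ne_of_gt this
    have hne2 : L - μ ≠ 0 := ne_of_gt hL'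
    field_simp
    ring
  rw [ge_iff_le, hfinal, ← hnorm]
  rw [hnorm] at coco
  rw [hG0y] at coco
  rw [← hnorm] at coco
  have h9 : μ / 2 * ‖x‖ ^ 2 - μ / 2 * ‖y‖ ^ 2 - μ * ⟪y, x - y⟫ - μ / 2 * ‖x - y‖ ^ 2 = 0 := by
    rw [hxy2]; ring
  linarith
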